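/- Assume n > 0 or m > 2. The structure 𝔄 admits a near-unanimity polymorphism of arity m^{2^n}+1, but admits no near-unanimity polymorphism of arity k for any k with 3 ≤ k ≤ m^{2^n}. -/

import Mathlib

/- The universe `A = {a, 0, 1, ..., n}` of size `n+2` is encoded as `Fin (n+2)`,
where `a` is encoded as `0` and the element `i ∈ {0, ..., n}` is encoded as `i+1`;
this encoding is order-preserving for the order `a < 0 < 1 < ⋯ < n`. -/

/-- A `k`-ary operation `t` is compatible with (preserves) an `r`-ary relation `S`:
applying `t` coordinatewise to `k` tuples from `S` yields a tuple in `S`. -/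
def Compat {A : Type*} {k r : ℕ} (t : (Fin k → A) → A) (S : Set (Fin r → A)) : Prop :=
  ∀ u : Fin k → Fin r → A, (∀ j, u j ∈ S) → (fun i => t fun j => u j i) ∈ S

/-- Compatibility with a unary relation `X`: `t` maps `X^k` into `X`. -/
def CompatUnary {A : Type*} {k : ℕ} (t : (Fin k → A) → A) (X : Set A) : Prop :=
  ∀ u : Fin k → A, (∀ j, u j ∈ X) → t u ∈ X

/-- Compatibility with a binary relation, given as a set of pairs. -/
def Compat2 {A : Type*} {k : ℕ} (t : (Fin k → A) → A) (S : Set (A × A)) : Prop :=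
  ∀ u w : Fin k → A, (∀ j, (u j, w j) ∈ S) → (t u, t w) ∈ S

/-- An operation `t : A^k → A` is a near-unanimity (NU) operation if `k ≥ 3` and
any tuple whose coordinates all equal `x` except possibly one coordinate (with
value `y`) is mapped to the majority value `x`. -/
def IsNU {A : Type*} {k : ℕ} (t : (Fin k → A) → A) : Prop :=
  3 ≤ k ∧ ∀ (x y : A) (j : Fin k), t (Function.update (fun _ => x) j y) = x

/-- The `(m+1)`-ary relation `S_i`: all tuples `(x_0, …, x_m)` with
`x_0 ∈ {a,0,…,i-1}` (encoded value `≤ i`) and `x_1, …, x_m ∈ {a, i}` (encoded value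
`0` or `i+1`), except the tuple `(a, i, …, i)`, together with the constant tuples
`(j, …, j)` for `j ∈ {i+1, …, n}` (encoded value `≥ i+2`). -/
def Srel (n m i : ℕ) : Set (Fin (m + 1) → Fin (n + 2)) :=
  {x | ((x 0).val ≤ i ∧ (∀ j, j ≠ 0 → ((x j).val = 0 ∨ (x j).val = i + 1)) ∧
          ¬((x 0).val = 0 ∧ ∀ j, j ≠ 0 → (x j).val = i + 1)) ∨
        (∃ c : Fin (n + 2), i + 2 ≤ c.val ∧ ∀ j, x j = c)}

/-- A polymorphism of the structure `𝔄 = (A; S_0, …, S_n, (X)_{∅ ≠ X ⊆ A})`: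
an operation compatible with each `S_i` and with every nonempty unary relation. -/
def PolyA (n m : ℕ) {k : ℕ} (t : (Fin k → Fin (n + 2)) → Fin (n + 2)) : Prop :=
  (∀ i ≤ n, Compat t (Srel n m i)) ∧
  (∀ X : Set (Fin (n + 2)), X.Nonempty → CompatUnary t X)

namespace NUAux

open Finset

/-- number of coordinates with value ≤ l -/
def cnt {n K : ℕ} (u : Fin K → Fin (n+2)) (l : ℕ) : ℕ :=
  (Finset.univ.filter (fun j => (u j).val ≤ l)).card

/-- set of "full" levels -/
def Pst (n m : ℕ) {K : ℕ} (u : Fin K → Fin (n+2)) : Finset ℕ :=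
  (Finset.range (n+1)).filter (fun l => m ^ (2^l) * cnt u l < cnt u (l+1))

lemma Pst_lt {n m K : ℕ} {u : Fin K → Fin (n+2)} {l : ℕ} (h : l ∈ Pst n m u) : l < n + 1 :=
  Finset.mem_range.mp (Finset.mem_filter.mp h).1

lemma mem_Pst {n m K : ℕ} {u : Fin K → Fin (n+2)} {l : ℕ} :
    l ∈ Pst n m u ↔ l < n + 1 ∧ m ^ (2^l) * cnt u l < cnt u (l+1) := by
  simp [Pst]

/-- the NU operation -/
def tOp (n m : ℕ) {K : ℕ} (u : Fin K → Fin (n+2)) : Fin (n+2) :=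
  if h : (Pst n m u).Nonempty then ⟨(Pst n m u).max' h + 1, by
    have := Pst_lt ((Pst n m u).max'_mem h); omega⟩ else 0

lemma tOp_of_nonempty {n m K : ℕ} {u : Fin K → Fin (n+2)} (h : (Pst n m u).Nonempty) :
    (tOp n m u).val = (Pst n m u).max' h + 1 := by
  simp [tOp, h]

lemma tOp_of_empty {n m K : ℕ} {u : Fin K → Fin (n+2)} (h : ¬ (Pst n m u).Nonempty) :
    tOp n m u = 0 := by
  simp [tOp, h]

lemma cnt_mono {n K : ℕ} (u : Fin K → Fin (n+2)) {l l' : ℕ} (h : l ≤ l') :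
    cnt u l ≤ cnt u l' := by
  apply Finset.card_le_card
  intro j hj
  simp only [Finset.mem_filter, Finset.mem_univ, true_and] at *
  omega

lemma cnt_lt_of_mem_Pst {n m K : ℕ} {u : Fin K → Fin (n+2)} {l : ℕ}
    (hm : 1 ≤ m) (h : l ∈ Pst n m u) : cnt u l < cnt u (l+1) := by
  have h2 := (mem_Pst.mp h).2
  have : cnt u l ≤ m ^ (2^l) * cnt u l :=
    Nat.le_mul_of_pos_left _ (Nat.pow_pos hm)
  omega

/-- there is a coordinate realizing the max level value -/
lemma exists_coord {n m K : ℕ} {u : Fin K → Fin (n+2)} (hm : 1 ≤ m)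
    (h : (Pst n m u).Nonempty) : ∃ j, (u j).val = (Pst n m u).max' h + 1 := by
  have hlt := cnt_lt_of_mem_Pst hm ((Pst n m u).max'_mem h)
  by_contra hc
  push_neg at hc
  have heq : (Finset.univ.filter (fun j => (u j).val ≤ (Pst n m u).max' h)) =
      (Finset.univ.filter (fun j => (u j).val ≤ (Pst n m u).max' h + 1)) := by
    apply Finset.filter_congr
    intro j _
    constructor
    · intro; omega
    · intro h2
      have := hc j
      omega
  unfold cnt at hlt
  rw [heq] at hlt
  omega

/-- conservativity -/
lemma tOp_conservative {n m K : ℕ} (hm : 1 ≤ m) (hK : 0 < K) (u : Fin K → Fin (n+2)) :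
    ∃ j, tOp n m u = u j := by
  by_cases h : (Pst n m u).Nonempty
  · obtain ⟨j, hj⟩ := exists_coord hm h
    refine ⟨j, ?_⟩
    apply Fin.ext
    rw [tOp_of_nonempty h, hj]
  · rw [tOp_of_empty h]
    by_contra hc
    push_neg at hc
    -- all values are nonzero; the minimum level is in Pst
    have hne : (Finset.univ.image (fun j => (u j).val)).Nonempty := by
      refine ⟨(u ⟨0, hK⟩).val, Finset.mem_image.mpr ⟨⟨0, hK⟩, Finset.mem_univ _, rfl⟩⟩
    obtain ⟨j0, _, hj0⟩ := Finset.mem_image.mp ((Finset.univ.image (fun j => (u j).val)).min'_mem hne)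
    set M := (Finset.univ.image (fun j => (u j).val)).min' hne with hM
    have hMpos : 1 ≤ M := by
      rcases Nat.eq_zero_or_pos M with h0 | h1
      · exfalso; apply hc j0; apply Fin.ext; simp only [Fin.val_zero]; omega
      · exact h1
    have hMle : M ≤ n + 1 := by
      have := (u j0).isLt; omega
    have h1 : cnt u (M - 1) = 0 := by
      unfold cnt
      rw [Finset.card_eq_zero, Finset.filter_eq_empty_iff]
      intro j _
      have : M ≤ (u j).val := Finset.min'_le _ _ (Finset.mem_image.mpr ⟨j, Finset.mem_univ _, rfl⟩)
      omega
    have h2 : 1 ≤ cnt u M := by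
      have : j0 ∈ Finset.univ.filter (fun j => (u j).val ≤ M) := by
        simp [hj0]
      have := Finset.card_pos.mpr ⟨j0, this⟩
      exact this
    apply h
    refine ⟨M - 1, mem_Pst.mpr ⟨by omega, ?_⟩⟩
    have : M - 1 + 1 = M := by omega
    rw [h1, this]
    simp only [Nat.mul_zero]; omega

lemma cnt_le_card {n K : ℕ} (u : Fin K → Fin (n+2)) (l : ℕ) : cnt u l ≤ K := by
  have := Finset.card_filter_le (Finset.univ : Finset (Fin K)) (fun j => (u j).val ≤ l)
  simpa [cnt] using this

lemma cnt_update {n K : ℕ} (x y : Fin (n+2)) (j0 : Fin K) (l : ℕ) :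
    cnt (Function.update (fun _ => x) j0 y) l =
      (if y.val ≤ l then 1 else 0) + (if x.val ≤ l then K - 1 else 0) := by
  classical
  unfold cnt
  have hcard : (Finset.univ.erase j0).card = K - 1 := by
    rw [Finset.card_erase_of_mem (Finset.mem_univ _)]
    simp
  by_cases hy : y.val ≤ l <;> by_cases hx : x.val ≤ l
  · have : (Finset.univ.filter (fun j => ((Function.update (fun _ => x) j0 y) j).val ≤ l))
        = Finset.univ := by
      apply Finset.eq_univ_of_forall
      intro j
      simp only [Finset.mem_filter, Finset.mem_univ, true_and]
      by_cases h : j = j0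
      · subst h; simp [Function.update_self, hy]
      · simp [Function.update_of_ne h, hx]
    rw [this]
    simp only [Finset.card_univ, Fintype.card_fin, if_pos hy, if_pos hx]
    have : 1 ≤ K := j0.pos
    omega
  · have : (Finset.univ.filter (fun j => ((Function.update (fun _ => x) j0 y) j).val ≤ l))
        = {j0} := by
      ext j
      simp only [Finset.mem_filter, Finset.mem_univ, true_and, Finset.mem_singleton]
      by_cases h : j = j0
      · subst h; simp [Function.update_self, hy]
      · simp [Function.update_of_ne h, hx, h]
    rw [this]
    simp [hy, hx]
  · have : (Finset.univ.filter (fun j => ((Function.update (fun _ => x) j0 y) j).val ≤ l))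
        = Finset.univ.erase j0 := by
      ext j
      simp only [Finset.mem_filter, Finset.mem_univ, true_and, Finset.mem_erase]
      by_cases h : j = j0
      · subst h; simp [Function.update_self, hy]
      · simp [Function.update_of_ne h, hx, h]
    rw [this, hcard]
    simp [hy, hx]
  · have : (Finset.univ.filter (fun j => ((Function.update (fun _ => x) j0 y) j).val ≤ l))
        = ∅ := by
      rw [Finset.filter_eq_empty_iff]
      intro j _
      by_cases h : j = j0
      · subst h; simp [Function.update_self, hy]
      · simp [Function.update_of_ne h, hx]
    rw [this]
    simp [hy, hx]


lemma tOp_isNU (n m : ℕ) (hm : 2 ≤ m) :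
    IsNU (tOp n m (K := m ^ 2 ^ n + 1)) := by
  have hKb : 2 ≤ m ^ 2 ^ n := by
    calc 2 = 2 ^ 1 := rfl
    _ ≤ 2 ^ 2 ^ n := Nat.pow_le_pow_right (by omega) (Nat.one_le_two_pow)
    _ ≤ m ^ 2 ^ n := Nat.pow_le_pow_left hm _
  refine ⟨by omega, ?_⟩
  intro x y j0
  set u := Function.update (fun _ : Fin (m ^ 2 ^ n + 1) => x) j0 y with hu
  have hcnt : ∀ l, cnt u l =
      (if y.val ≤ l then 1 else 0) + (if x.val ≤ l then (m ^ 2 ^ n + 1) - 1 else 0) :=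
    fun l => cnt_update x y j0 l
  have hdle : ∀ l : ℕ, 2 ≤ m ^ 2 ^ l := by
    intro l
    calc 2 = 2 ^ 1 := rfl
    _ ≤ 2 ^ 2 ^ l := Nat.pow_le_pow_right (by omega) (Nat.one_le_two_pow)
    _ ≤ m ^ 2 ^ l := Nat.pow_le_pow_left hm _
  rcases Nat.eq_zero_or_pos x.val with hx0 | hxpos
  · -- x = 0 : no level is full
    have hPe : ¬ (Pst n m u).Nonempty := by
      rintro ⟨l, hl⟩
      have h2 := (mem_Pst.mp hl).2
      have h1 : cnt u l ≥ m ^ 2 ^ n := by rw [hcnt l, hx0]; simp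
      have h3 : cnt u (l+1) ≤ m ^ 2 ^ n + 1 := cnt_le_card u (l+1)
      have h4 : m ^ 2 ^ l * cnt u l ≥ 2 * (m ^ 2 ^ n) :=
        Nat.mul_le_mul (hdle l) h1
      omega
    rw [tOp_of_empty hPe]
    apply Fin.ext
    simp [hx0]
  · -- x has value v+1
    obtain ⟨v, hv⟩ : ∃ v, x.val = v + 1 := ⟨x.val - 1, by omega⟩
    have hvn : v ≤ n := by have := x.isLt; omega
    have hdv : m ^ 2 ^ v ≤ m ^ 2 ^ n :=
      Nat.pow_le_pow_right (by omega) (Nat.pow_le_pow_right (by omega) hvn)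
    have hvmem : v ∈ Pst n m u := by
      refine mem_Pst.mpr ⟨by omega, ?_⟩
      rw [hcnt v, hcnt (v+1)]
      have hxv : ¬ x.val ≤ v := by omega
      have hxv1 : x.val ≤ v + 1 := by omega
      rw [if_neg hxv, if_pos hxv1]
      by_cases hy : y.val ≤ v
      · rw [if_pos hy, if_pos (by omega : y.val ≤ v + 1)]
        have he : m ^ 2 ^ v * (1 + 0) = m ^ 2 ^ v := by ring
        rw [he]
        omega
      · rw [if_neg hy]
        simp only [Nat.add_zero, Nat.zero_add, Nat.mul_zero]
        omega
    have hmax : ∀ l ∈ Pst n m u, l ≤ v := by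
      intro l hl
      by_contra hc
      push_neg at hc
      have h2 := (mem_Pst.mp hl).2
      have h1 : cnt u l ≥ m ^ 2 ^ n := by
        rw [hcnt l, if_pos (by omega : x.val ≤ l)]
        omega
      have h3 : cnt u (l+1) ≤ m ^ 2 ^ n + 1 := cnt_le_card u (l+1)
      have h4 : m ^ 2 ^ l * cnt u l ≥ 2 * (m ^ 2 ^ n) :=
        Nat.mul_le_mul (hdle l) h1
      omega
    have hne : (Pst n m u).Nonempty := ⟨v, hvmem⟩
    have hmx : (Pst n m u).max' hne = v :=
      le_antisymm (hmax _ ((Pst n m u).max'_mem hne)) ((Pst n m u).le_max' v hvmem)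
    apply Fin.ext
    rw [tOp_of_nonempty hne, hmx, hv]

lemma tOp_compat (n m : ℕ) (hm : 1 ≤ m) (i : ℕ) (hi : i ≤ n) (K : ℕ) :
    Compat (tOp n m (K := K)) (Srel n m i) := by
  intro u hu
  set c : Fin (m+1) → Fin K → Fin (n+2) := fun p j => u j p with hc
  have hconst : ∀ j, i + 2 ≤ (u j 0).val → ∀ p, u j p = u j 0 := by
    intro j hj p
    rcases hu j with ⟨h1, _, _⟩ | ⟨cv, hcv, hall⟩
    · omega
    · rw [hall p, hall 0]
  have hfirst : ∀ j, ¬ (i + 2 ≤ (u j 0).val) →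
      ((u j 0).val ≤ i ∧ (∀ p, p ≠ 0 → ((u j p).val = 0 ∨ (u j p).val = i+1)) ∧
        ¬((u j 0).val = 0 ∧ ∀ p, p ≠ 0 → (u j p).val = i+1)) := by
    intro j hj
    rcases hu j with h | ⟨cv, hcv, hall⟩
    · exact h
    · exfalso; rw [hall 0] at hj; omega
  have hcnthigh : ∀ (p : Fin (m+1)) (l : ℕ), i + 1 ≤ l → cnt (c p) l = cnt (c 0) l := by
    intro p l hl
    unfold cnt
    congr 1
    apply Finset.filter_congr
    intro j _
    simp only [hc]
    by_cases hb : i + 2 ≤ (u j 0).val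
    · rw [hconst j hb p]
    · obtain ⟨h1, h2, _⟩ := hfirst j hb
      constructor
      · intro _; omega
      · intro _
        by_cases hp : p = 0
        · rw [hp]; omega
        · rcases h2 p hp with h | h <;> omega
  have hPhigh : ∀ (p : Fin (m+1)) (l : ℕ), i + 1 ≤ l →
      (l ∈ Pst n m (c p) ↔ l ∈ Pst n m (c 0)) := by
    intro p l hl
    rw [mem_Pst, mem_Pst, hcnthigh p l hl, hcnthigh p (l+1) (by omega)]
  by_cases hH : ∃ l, i + 1 ≤ l ∧ l ∈ Pst n m (c 0)
  · -- Case A : a common high level fires; result is a constant tuple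
    obtain ⟨l0, hl0i, hl0⟩ := hH
    set H := (Pst n m (c 0)).filter (fun l => i + 1 ≤ l) with hH2
    have hne : H.Nonempty := ⟨l0, Finset.mem_filter.mpr ⟨hl0, hl0i⟩⟩
    set L := H.max' hne with hL
    have hLP : L ∈ Pst n m (c 0) ∧ i + 1 ≤ L := by
      have h := Finset.mem_filter.mp (H.max'_mem hne)
      exact ⟨h.1, h.2⟩
    have hkey : ∀ p : Fin (m+1), ∃ h : (Pst n m (c p)).Nonempty,
        (Pst n m (c p)).max' h = L := by
      intro p
      have hmem : L ∈ Pst n m (c p) := (hPhigh p L hLP.2).mpr hLP.1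
      refine ⟨⟨L, hmem⟩, ?_⟩
      apply le_antisymm
      · apply Finset.max'_le
        intro x hx
        by_cases hxl : i + 1 ≤ x
        · exact H.le_max' x (Finset.mem_filter.mpr ⟨(hPhigh p x hxl).mp hx, hxl⟩)
        · omega
      · exact Finset.le_max' _ _ hmem
    have hLn : L < n + 1 := Pst_lt hLP.1
    refine Or.inr ⟨⟨L + 1, by omega⟩, by have := hLP.2; show i + 2 ≤ L + 1; omega, ?_⟩
    intro p
    obtain ⟨hp, hmx⟩ := hkey p
    apply Fin.ext
    show (tOp n m (c p)).val = L + 1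
    rw [tOp_of_nonempty hp, hmx]
  · -- Case B : no high level fires
    push_neg at hH
    have hHp : ∀ (p : Fin (m+1)) (l : ℕ), i + 1 ≤ l → l ∉ Pst n m (c p) := by
      intro p l hl hmem
      exact hH l hl ((hPhigh p l hl).mp hmem)
    set Zc : Fin (m+1) → ℕ := fun p => (Finset.univ.filter (fun j => u j p = 0)).card with hZc
    set gc : ℕ := (Finset.univ.filter (fun j => ¬ i + 2 ≤ (u j 0).val)).card with hgc
    have hlowp : ∀ p : Fin (m+1), p ≠ 0 → ∀ l, l ≤ i → cnt (c p) l = Zc p := by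
      intro p hp l hl
      unfold cnt
      rw [hZc]
      congr 1
      apply Finset.filter_congr
      intro j _
      simp only [eq_iff_iff, hc]
      by_cases hb : i + 2 ≤ (u j 0).val
      · have hcst := hconst j hb p
        constructor
        · intro h; rw [hcst] at h; omega
        · intro h; rw [h] at hcst; exfalso
          have : (u j 0).val = 0 := by rw [← hcst]; rfl
          omega
      · obtain ⟨h1, h2, _⟩ := hfirst j hb
        rcases h2 p hp with h | h
        · constructor
          · intro _; exact Fin.ext (by simpa using h)
          · intro _; omega
        · constructor
          · intro _; omega
          · intro hz; rw [hz] at h; simp at h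
    have hval0 : ∀ (j : Fin K) (p : Fin (m+1)), u j p = 0 ↔ (u j p).val = 0 := by
      intro j p
      constructor
      · intro h; rw [h]; rfl
      · intro h; exact Fin.ext (by simpa using h)
    have hcnt0low : ∀ l, l ≤ i → cnt (c 0) (l) =
        (Finset.univ.filter (fun j => ¬ i + 2 ≤ (u j 0).val ∧ (u j 0).val ≤ l)).card := by
      intro l hl
      unfold cnt
      congr 1
      apply Finset.filter_congr
      intro j _
      simp only [eq_iff_iff, hc]
      constructor
      · intro h; exact ⟨by omega, h⟩
      · intro h; exact h.2
    have hcnt0g : ∀ l, i ≤ l → l ≤ i + 1 → cnt (c 0) l = gc := by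
      intro l h1 h2
      unfold cnt
      rw [hgc]
      congr 1
      apply Finset.filter_congr
      intro j _
      simp only [eq_iff_iff, hc]
      by_cases hb : i + 2 ≤ (u j 0).val
      · constructor
        · intro h; omega
        · intro h; omega
      · have := (hfirst j hb).1
        constructor
        · intro _; exact hb
        · intro _; omega
    have hcntpg : ∀ p : Fin (m+1), p ≠ 0 → cnt (c p) (i+1) = gc := by
      intro p hp
      unfold cnt
      rw [hgc]
      congr 1
      apply Finset.filter_congr
      intro j _
      simp only [eq_iff_iff, hc]
      by_cases hb : i + 2 ≤ (u j 0).val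
      · have hcst := hconst j hb p
        rw [hcst]
        constructor
        · intro h; omega
        · intro h; omega
      · obtain ⟨h1, h2, _⟩ := hfirst j hb
        constructor
        · intro _; exact hb
        · intro _; rcases h2 p hp with h | h <;> omega
    have hPplow : ∀ p : Fin (m+1), p ≠ 0 → ∀ l ∈ Pst n m (c p), l = i := by
      intro p hp l hl
      by_contra hne
      have hcond := (mem_Pst.mp hl).2
      rcases Nat.lt_or_ge l i with hlt | hge
      · rw [hlowp p hp l (by omega), hlowp p hp (l+1) (by omega)] at hcond
        have : Zc p ≤ m ^ 2 ^ l * Zc p := Nat.le_mul_of_pos_left _ (Nat.pow_pos hm)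
        omega
      · exact hHp p l (by omega) hl
    have hP0low : ∀ l ∈ Pst n m (c 0), l < i := by
      intro l hl
      by_contra hge
      push_neg at hge
      have hcond := (mem_Pst.mp hl).2
      rcases Nat.lt_or_ge l (i+1) with hlt | hge2
      · have hli : l = i := by omega
        rw [hli, hcnt0g i le_rfl (by omega), hcnt0g (i+1) (by omega) le_rfl] at hcond
        have : gc ≤ m ^ 2 ^ i * gc := Nat.le_mul_of_pos_left _ (Nat.pow_pos hm)
        omega
      · exact hHp 0 l hge2 hl
    have htp : ∀ p : Fin (m+1), p ≠ 0 →
        tOp n m (c p) = 0 ∨ ((tOp n m (c p)).val = i + 1 ∧ m ^ 2 ^ i * Zc p < gc) := by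
      intro p hp
      by_cases hne : (Pst n m (c p)).Nonempty
      · right
        have hmx : (Pst n m (c p)).max' hne = i := hPplow p hp _ ((Pst n m (c p)).max'_mem hne)
        constructor
        · rw [tOp_of_nonempty hne, hmx]
        · have := (mem_Pst.mp ((Pst n m (c p)).max'_mem hne)).2
          rw [hmx] at this
          rw [hlowp p hp i le_rfl, hcntpg p hp] at this
          exact this
      · left; exact tOp_of_empty hne
    have ht0 : (tOp n m (c 0)).val ≤ i := by
      by_cases hne : (Pst n m (c 0)).Nonempty
      · rw [tOp_of_nonempty hne]
        have := hP0low _ ((Pst n m (c 0)).max'_mem hne)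
        omega
      · rw [tOp_of_empty hne]; simp
    by_cases hall : ∀ p : Fin (m+1), p ≠ 0 → (tOp n m (c p)).val = i + 1
    · -- B2 : all side columns evaluate to b_i; column 0 must be alive
      have hZ : ∀ p : Fin (m+1), p ≠ 0 → m ^ 2 ^ i * Zc p < gc := by
        intro p hp
        rcases htp p hp with h | h
        · exfalso
          have := hall p hp
          rw [h] at this
          simp at this
        · exact h.2
      have hp1 : (⟨1, by omega⟩ : Fin (m+1)) ≠ 0 := by
        intro h
        have := congrArg Fin.val h
        simp at this
      have hg1 : 1 ≤ gc := by
        have := hZ _ hp1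
        omega
      by_cases hne0 : (Pst n m (c 0)).Nonempty
      · refine Or.inl ⟨ht0, ?_, ?_⟩
        · intro p hp
          right
          exact hall p hp
        · rintro ⟨h0, -⟩
          have h1 : ((fun q => tOp n m fun j => u j q) 0).val = (tOp n m (c 0)).val := rfl
          rw [h1] at h0
          have h2 : (tOp n m (c 0)).val = (Pst n m (c 0)).max' hne0 + 1 :=
            tOp_of_nonempty hne0
          omega
      · exfalso
        -- telescoping bound
        set a0 := cnt (c 0) 0 with ha0
        have htel : ∀ L, L ≤ i → cnt (c 0) L ≤ m ^ (2 ^ L - 1) * a0 := by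
          intro L
          induction L with
          | zero => intro _; simp [ha0]
          | succ L ih =>
            intro hLi
            have hnotmem : (L) ∉ Pst n m (c 0) := fun hmem => hne0 ⟨L, hmem⟩
            have hncond : ¬ (m ^ 2 ^ L * cnt (c 0) L < cnt (c 0) (L + 1)) := by
              intro hcond
              exact hnotmem (mem_Pst.mpr ⟨by omega, hcond⟩)
            push_neg at hncond
            have h1 : cnt (c 0) (L+1) ≤ m ^ 2 ^ L * (m ^ (2 ^ L - 1) * a0) :=
              le_trans hncond (Nat.mul_le_mul_left _ (ih (by omega)))
            have h2 : m ^ 2 ^ L * (m ^ (2 ^ L - 1) * a0) = m ^ (2 ^ (L+1) - 1) * a0 := by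
              rw [← Nat.mul_assoc, ← pow_add]
              congr 2
              have h3 : 1 ≤ 2 ^ L := Nat.one_le_two_pow
              have h4 : 2 ^ (L+1) = 2 * 2 ^ L := by rw [pow_succ]; ring
              omega
            rw [h2] at h1
            exact h1
        have hgtel : gc ≤ m ^ (2 ^ i - 1) * a0 := by
          rw [← hcnt0g i le_rfl (by omega)]
          exact htel i le_rfl
        -- row sum bound
        have ha0sum : a0 ≤ ∑ p ∈ Finset.univ.erase (0 : Fin (m+1)), Zc p := by
          have hsub : (Finset.univ.filter (fun j => (u j 0).val ≤ 0)) ⊆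
              (Finset.univ.erase (0 : Fin (m+1))).biUnion
                (fun p => Finset.univ.filter (fun j => u j p = 0)) := by
            intro j hj
            simp only [Finset.mem_filter, Finset.mem_univ, true_and] at hj
            have hb : ¬ i + 2 ≤ (u j 0).val := by omega
            obtain ⟨-, h2, h3⟩ := hfirst j hb
            push_neg at h3
            obtain ⟨p, hp, hpv⟩ := h3 (by omega)
            rcases h2 p hp with h | h
            · refine Finset.mem_biUnion.mpr ⟨p, Finset.mem_erase.mpr ⟨hp, Finset.mem_univ _⟩, ?_⟩
              simp only [Finset.mem_filter, Finset.mem_univ, true_and]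
              exact (hval0 j p).mpr h
            · omega
          calc a0 ≤ ((Finset.univ.erase (0 : Fin (m+1))).biUnion
                (fun p => Finset.univ.filter (fun j => u j p = 0))).card :=
              Finset.card_le_card hsub
          _ ≤ ∑ p ∈ Finset.univ.erase (0 : Fin (m+1)),
                (Finset.univ.filter (fun j => u j p = 0)).card := Finset.card_biUnion_le
        have hsum : m ^ 2 ^ i * a0 ≤ m * (gc - 1) := by
          calc m ^ 2 ^ i * a0 ≤ m ^ 2 ^ i * ∑ p ∈ Finset.univ.erase (0 : Fin (m+1)), Zc p :=
              Nat.mul_le_mul_left _ ha0sum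
          _ = ∑ p ∈ Finset.univ.erase (0 : Fin (m+1)), m ^ 2 ^ i * Zc p := by
              rw [Finset.mul_sum]
          _ ≤ ∑ _p ∈ Finset.univ.erase (0 : Fin (m+1)), (gc - 1) := by
              apply Finset.sum_le_sum
              intro p hp
              have := hZ p (Finset.mem_erase.mp hp).1
              omega
          _ = (Finset.univ.erase (0 : Fin (m+1))).card * (gc - 1) := by
              rw [Finset.sum_const, smul_eq_mul]
          _ = m * (gc - 1) := by
              rw [Finset.card_erase_of_mem (Finset.mem_univ _)]
              simp
        have hfin : m * gc ≤ m ^ 2 ^ i * a0 := by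
          calc m * gc ≤ m * (m ^ (2 ^ i - 1) * a0) := Nat.mul_le_mul_left _ hgtel
          _ = m ^ 2 ^ i * a0 := by
            rw [← Nat.mul_assoc]
            congr 2
            have h3 : 1 ≤ 2 ^ i := Nat.one_le_two_pow
            calc m * m ^ (2 ^ i - 1) = m ^ 1 * m ^ (2 ^ i - 1) := by ring
            _ = m ^ (1 + (2 ^ i - 1)) := by rw [← pow_add]
            _ = m ^ 2 ^ i := by congr 1; omega
        have hkey2 : m * (gc - 1) + m = m * gc := by
          rw [← Nat.mul_succ]
          congr 1
          omega
        omega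
    · -- B1 : some side column evaluates to 0
      push_neg at hall
      obtain ⟨p0, hp0, hp0v⟩ := hall
      have hp00 : tOp n m (c p0) = 0 := by
        rcases htp p0 hp0 with h | h
        · exact h
        · exact absurd h.1 hp0v
      refine Or.inl ⟨ht0, ?_, ?_⟩
      · intro p hp
        rcases htp p hp with h | h
        · left
          show (tOp n m (c p)).val = 0
          rw [h]
          rfl
        · right; exact h.1
      · rintro ⟨-, hA⟩
        have hA0 := hA p0 hp0
        have h2 : ((fun q => tOp n m fun j => u j q) p0).val = (tOp n m (c p0)).val := rfl
        rw [h2, hp00] at hA0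
        simp at hA0

/-! ### Lower bound -/

def Zs {n k : ℕ} (q : Fin k → Fin (n+2)) : Finset (Fin k) :=
  Finset.univ.filter (fun j => q j = 0)

def pat {n k : ℕ} (q : Fin k → Fin (n+2)) (b : Fin (n+2)) (T : Finset (Fin k)) :
    Fin k → Fin (n+2) :=
  fun j => if q j = 0 then (if j ∈ T then b else 0) else q j

def el (n i : ℕ) : Fin (n+2) := ⟨min (i+1) (n+1), by omega⟩

lemma el_val {n i : ℕ} (hi : i ≤ n) : (el n i).val = i + 1 := by
  simp only [el]
  omega

lemma el_ne {n i : ℕ} : el n i ≠ 0 := by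
  intro h
  have := congrArg Fin.val h
  simp only [el, Fin.val_zero] at this
  omega

lemma mem_Zs {n k : ℕ} {q : Fin k → Fin (n+2)} {j : Fin k} : j ∈ Zs q ↔ q j = 0 := by
  simp [Zs]

lemma pat_of_ne {n k : ℕ} {q : Fin k → Fin (n+2)} {b : Fin (n+2)} {T : Finset (Fin k)}
    {j : Fin k} (h : q j ≠ 0) : pat q b T j = q j := by
  simp [pat, h]

lemma pat_of_mem {n k : ℕ} {q : Fin k → Fin (n+2)} {b : Fin (n+2)} {T : Finset (Fin k)}
    {j : Fin k} (h : q j = 0) (hT : j ∈ T) : pat q b T j = b := by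
  simp [pat, h, hT]

lemma pat_of_nmem {n k : ℕ} {q : Fin k → Fin (n+2)} {b : Fin (n+2)} {T : Finset (Fin k)}
    {j : Fin k} (h : q j = 0) (hT : j ∉ T) : pat q b T j = 0 := by
  simp [pat, h, hT]

lemma Zs_pat {n k : ℕ} {q : Fin k → Fin (n+2)} {b : Fin (n+2)} {T : Finset (Fin k)}
    (hb : b ≠ 0) (hT : T ⊆ Zs q) : Zs (pat q b T) = Zs q \ T := by
  ext j
  simp only [mem_Zs, Finset.mem_sdiff]
  by_cases h : q j = 0
  · by_cases hj : j ∈ T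
    · rw [pat_of_mem h hj]
      constructor
      · intro hb'; exact absurd hb' hb
      · rintro ⟨-, hnT⟩; exact absurd hj hnT
    · rw [pat_of_nmem h hj]
      constructor
      · intro _; exact ⟨h, hj⟩
      · intro _; rfl
  · rw [pat_of_ne h]
    constructor
    · intro h'; exact absurd h' h
    · rintro ⟨hz, -⟩; exact absurd hz h

/-- conservativity from unary compatibility -/
lemma cons_of_poly {n m k : ℕ} {t : (Fin k → Fin (n+2)) → Fin (n+2)}
    (hpoly : PolyA n m t) (hk : 0 < k) (q : Fin k → Fin (n+2)) : ∃ j, t q = q j := by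
  have hmem := hpoly.2 (Set.range q) ⟨q ⟨0, hk⟩, Set.mem_range_self _⟩ q
    (fun j => Set.mem_range_self j)
  obtain ⟨j, hj⟩ := hmem
  exact ⟨j, hj.symm⟩

/-- the key one-step scenario: the pattern `pat q b T` evaluated against dead/alive
context `q` -/
lemma strip_core {n m k i : ℕ} {t : (Fin k → Fin (n+2)) → Fin (n+2)}
    (hm : 2 ≤ m) (hcmp : Compat t (Srel n m i)) (hi : i ≤ n)
    (q : Fin k → Fin (n+2)) (hq : ∀ j, q j = 0 ∨ i + 2 ≤ (q j).val) (T : Finset (Fin k)) :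
    ((t q).val ≤ i ∧ ((t (pat q (el n i) T)).val = 0 ∨ (t (pat q (el n i) T)).val = i+1))
    ∨ (∃ cv : Fin (n+2), i + 2 ≤ cv.val ∧ t q = cv ∧ t (pat q (el n i) T) = cv) := by
  set p1 : Fin (m+1) := ⟨1, by omega⟩ with hp1
  have hp1ne : p1 ≠ 0 := by
    intro h
    have := congrArg Fin.val h
    simp [hp1] at this
  set u : Fin k → Fin (m+1) → Fin (n+2) :=
    fun j p => if p = p1 then pat q (el n i) T j else q j with hu
  have h0 : (fun j => u j 0) = q := by
    funext j
    simp only [hu]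
    rw [if_neg (by intro h; exact hp1ne h.symm)]
  have h1 : (fun j => u j p1) = pat q (el n i) T := by
    funext j
    simp only [hu]
    simp
  have hrows : ∀ j, u j ∈ Srel n m i := by
    intro j
    rcases hq j with hqj | hbig
    · by_cases hjT : j ∈ T
      · left
        refine ⟨?_, ?_, ?_⟩
        · have : u j 0 = q j := by
            simp only [hu]; rw [if_neg (by intro h; exact hp1ne h.symm)]
          rw [this, hqj]; simp
        · intro p hp
          simp only [hu]
          by_cases hpp : p = p1
          · rw [if_pos hpp, pat_of_mem hqj hjT, el_val hi]; right; rfl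
          · rw [if_neg hpp, hqj]; left; rfl
        · rintro ⟨-, hall⟩
          have hp2 : ((⟨2, by omega⟩ : Fin (m+1)) : Fin (m+1)) ≠ 0 := by
            intro h; have := congrArg Fin.val h; simp at this
          have := hall ⟨2, by omega⟩ hp2
          simp only [hu] at this
          rw [if_neg (by intro h; have := congrArg Fin.val h; simp [hp1] at this), hqj] at this
          simp at this
      · have hconst : ∀ p, u j p = 0 := by
          intro p
          simp only [hu]
          by_cases hpp : p = p1
          · rw [if_pos hpp, pat_of_nmem hqj hjT]
          · rw [if_neg hpp, hqj]
        left
        refine ⟨?_, ?_, ?_⟩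
        · rw [hconst 0]; simp
        · intro p hp; rw [hconst p]; left; rfl
        · rintro ⟨-, hall⟩
          have := hall p1 hp1ne
          rw [hconst p1] at this
          simp at this
    · right
      have hne : q j ≠ 0 := by
        intro h; rw [h] at hbig; simp at hbig
      refine ⟨q j, hbig, ?_⟩
      intro p
      simp only [hu]
      by_cases hpp : p = p1
      · rw [if_pos hpp, pat_of_ne hne]
      · rw [if_neg hpp]
  have hres := hcmp u hrows
  simp only [Srel, Set.mem_setOf_eq] at hres
  rcases hres with ⟨ha, hb2, -⟩ | ⟨cv, hcv, hall⟩
  · left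
    constructor
    · rw [h0] at ha; exact ha
    · have := hb2 p1 hp1ne
      rw [h1] at this
      exact this
  · right
    refine ⟨cv, hcv, ?_, ?_⟩
    · have := hall 0
      rw [h0] at this
      exact this
    · have := hall p1
      rw [h1] at this
      exact this

lemma strip_dead {n m k i : ℕ} {t : (Fin k → Fin (n+2)) → Fin (n+2)}
    (hm : 2 ≤ m) (hcmp : Compat t (Srel n m i)) (hi : i ≤ n)
    (q : Fin k → Fin (n+2)) (hq : ∀ j, q j = 0 ∨ i + 2 ≤ (q j).val) (T : Finset (Fin k))
    (hdead : t q = 0) (hne : t (pat q (el n i) T) ≠ el n i) :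
    t (pat q (el n i) T) = 0 := by
  rcases strip_core hm hcmp hi q hq T with ⟨-, h | h⟩ | ⟨cv, hcv, h1, -⟩
  · exact Fin.ext (by simpa using h)
  · exfalso
    apply hne
    apply Fin.ext
    rw [h, el_val hi]
  · exfalso
    rw [hdead] at h1
    rw [← h1] at hcv
    simp at hcv

lemma strip_toDead {n m k i : ℕ} {t : (Fin k → Fin (n+2)) → Fin (n+2)}
    (hm : 2 ≤ m) (hcmp : Compat t (Srel n m i)) (hi : i ≤ n)
    (hcons : ∀ q, ∃ j, t q = q j)
    (q : Fin k → Fin (n+2)) (hq : ∀ j, q j = 0 ∨ i + 2 ≤ (q j).val) (T : Finset (Fin k))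
    (hgood : t (pat q (el n i) T) = el n i) :
    t q = 0 := by
  rcases strip_core hm hcmp hi q hq T with ⟨hle, -⟩ | ⟨cv, hcv, -, h2⟩
  · obtain ⟨j, hj⟩ := hcons q
    rcases hq j with h | h
    · rw [hj, h]
    · exfalso
      rw [hj] at hle
      omega
  · exfalso
    rw [hgood] at h2
    rw [← h2, el_val hi] at hcv
    omega

/-- partition a finite set of size ≤ M*s into M parts of size ≤ s, labelled 1..M -/
lemma exists_partition {α : Type*} [DecidableEq α] :
    ∀ (M : ℕ) (E : Finset α) (s : ℕ), E.card ≤ M * s →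
      ∃ π : α → ℕ, (∀ j ∈ E, 1 ≤ π j ∧ π j ≤ M) ∧
        ∀ p : ℕ, (E.filter (fun j => π j = p)).card ≤ s := by
  intro M
  induction M with
  | zero =>
    intro E s h
    simp only [Nat.zero_mul, Nat.le_zero, Finset.card_eq_zero] at h
    subst h
    exact ⟨fun _ => 1, by simp, by simp⟩
  | succ M ih =>
    intro E s h
    obtain ⟨F, hFE, hF⟩ := Finset.exists_subset_card_eq (min_le_right s E.card)
    have hE' : (E \ F).card ≤ M * s := by
      rw [Finset.card_sdiff_of_subset hFE, hF]
      have hms : (M + 1) * s = M * s + s := by ring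
      rcases Nat.le_total s E.card with hc | hc
      · rw [min_eq_left hc]; omega
      · rw [min_eq_right hc]; omega
    obtain ⟨π', hπ'b, hπ'c⟩ := ih (E \ F) s hE'
    set g : α → ℕ := fun j => if j ∈ F then M + 1 else π' j with hg
    have hgj : ∀ j, g j = if j ∈ F then M + 1 else π' j := fun _ => rfl
    refine ⟨g, ?_, ?_⟩
    · intro j hj
      rw [hgj j]
      by_cases hjF : j ∈ F
      · rw [if_pos hjF]; omega
      · rw [if_neg hjF]
        have := hπ'b j (Finset.mem_sdiff.mpr ⟨hj, hjF⟩)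
        omega
    · intro p
      by_cases hp : p = M + 1
      · subst hp
        have hsub : E.filter (fun j => g j = M + 1) ⊆ F := by
          intro j hj
          rw [Finset.mem_filter] at hj
          by_contra hjF
          have hj2 := hj.2
          rw [hgj j, if_neg hjF] at hj2
          have := hπ'b j (Finset.mem_sdiff.mpr ⟨hj.1, hjF⟩)
          omega
        calc (E.filter (fun j => g j = M + 1)).card ≤ F.card := Finset.card_le_card hsub
        _ ≤ s := by rw [hF]; exact min_le_left _ _
      · have heq : E.filter (fun j => g j = p)
            = (E \ F).filter (fun j => π' j = p) := by
          ext j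
          simp only [Finset.mem_filter, Finset.mem_sdiff]
          constructor
          · rintro ⟨hjE, hjv⟩
            rw [hgj j] at hjv
            by_cases hjF : j ∈ F
            · rw [if_pos hjF] at hjv; exact absurd hjv.symm hp
            · rw [if_neg hjF] at hjv; exact ⟨⟨hjE, hjF⟩, hjv⟩
          · rintro ⟨⟨hjE, hjF⟩, hjv⟩
            rw [hgj j, if_neg hjF]
            exact ⟨hjE, hjv⟩
        rw [heq]
        exact hπ'c p

/-- the lower-bound statement at level `i` -/
def LBstmt (n m k : ℕ) (t : (Fin k → Fin (n+2)) → Fin (n+2)) (i : ℕ) : Prop :=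
  ∀ (s : ℕ) (q : Fin k → Fin (n+2)), i ≤ n → (∀ j, q j = 0 ∨ i + 2 ≤ (q j).val) →
    (∀ T : Finset (Fin k), T ⊆ Zs q → (Zs q \ T).card ≤ s →
      t (pat q (el n i) T) = el n i) →
    s * m ^ 2 ^ i < (Zs q).card

lemma inner_step {n m k : ℕ} {t : (Fin k → Fin (n+2)) → Fin (n+2)}
    (hm : 2 ≤ m) (hpoly : PolyA n m t) :
    ∀ (L : ℕ), (∀ l, l ≤ L → LBstmt n m k t l) → L ≤ n →
    ∀ (q : Fin k → Fin (n+2)) (c : ℕ), (∀ j, q j = 0 ∨ L + 2 ≤ (q j).val) → t q = 0 →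
    (Zs q).card ≤ c * m ^ (2 ^ (L+1) - 1) →
    ∃ q' : Fin k → Fin (n+2),
      (∀ j, q' j = q j ∨ (q j = 0 ∧ 1 ≤ (q' j).val ∧ (q' j).val ≤ L + 1)) ∧
      t q' = 0 ∧ (Zs q').card ≤ c := by
  intro L
  induction L with
  | zero =>
    intro hLB hn q c hq hdead hcard
    have hcmp := hpoly.1 0 (by omega)
    have hfail : ¬ (∀ T : Finset (Fin k), T ⊆ Zs q → (Zs q \ T).card ≤ c →
        t (pat q (el n 0) T) = el n 0) := by
      intro hseed
      have hb := hLB 0 le_rfl c q (by omega) hq hseed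
      have hpow : m ^ 2 ^ 0 = m := by norm_num
      have hpow1 : m ^ (2 ^ (0+1) - 1) = m := by norm_num
      rw [hpow] at hb
      rw [hpow1] at hcard
      omega
    push_neg at hfail
    obtain ⟨T, hTs, hTc, hTne⟩ := hfail
    refine ⟨pat q (el n 0) T, ?_, ?_, ?_⟩
    · intro j
      rcases hq j with h | h
      · by_cases hjT : j ∈ T
        · right
          refine ⟨h, ?_, ?_⟩
          · rw [pat_of_mem h hjT, el_val (by omega : (0:ℕ) ≤ n)]
          · rw [pat_of_mem h hjT, el_val (by omega : (0:ℕ) ≤ n)]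
        · left; rw [pat_of_nmem h hjT, h]
      · left
        exact pat_of_ne (by intro h0; rw [h0] at h; simp at h)
    · exact strip_dead hm hcmp (by omega) q hq T hdead hTne
    · rw [Zs_pat el_ne hTs]; exact hTc
  | succ L ih =>
    intro hLB hn q c hq hdead hcard
    have hcmp := hpoly.1 (L+1) (by omega)
    set c1 := c * m ^ (2 ^ (L+1) - 1) with hc1
    have hcard1 : (Zs q).card ≤ c1 * m ^ 2 ^ (L+1) := by
      rw [hc1, Nat.mul_assoc, ← pow_add]
      have h2 : 1 ≤ 2 ^ (L+1) := Nat.one_le_two_pow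
      have h3 : 2 ^ (L+2) = 2 * 2 ^ (L+1) := by rw [pow_succ]; ring
      have hexp : (2 ^ (L+1) - 1) + 2 ^ (L+1) = 2 ^ (L+1+1) - 1 := by omega
      rw [hexp]
      exact hcard
    have hfail : ¬ (∀ T : Finset (Fin k), T ⊆ Zs q → (Zs q \ T).card ≤ c1 →
        t (pat q (el n (L+1)) T) = el n (L+1)) := by
      intro hseed
      have hb := hLB (L+1) le_rfl c1 q hn hq hseed
      omega
    push_neg at hfail
    obtain ⟨T, hTs, hTc, hTne⟩ := hfail
    set q1 := pat q (el n (L+1)) T with hq1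
    have hq1v : ∀ j, q1 j = 0 ∨ L + 2 ≤ (q1 j).val := by
      intro j
      rcases hq j with h | h
      · by_cases hjT : j ∈ T
        · right; rw [hq1, pat_of_mem h hjT, el_val hn]
        · left; rw [hq1, pat_of_nmem h hjT]
      · right
        rw [hq1, pat_of_ne (by intro h0; rw [h0] at h; simp at h)]
        omega
    have hq1dead : t q1 = 0 := strip_dead hm hcmp hn q hq T hdead hTne
    have hq1card : (Zs q1).card ≤ c * m ^ (2 ^ (L+1) - 1) := by
      rw [hq1, Zs_pat el_ne hTs]; exact hTc
    obtain ⟨q', hext, hdead', hcard'⟩ :=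
      ih (fun l hl => hLB l (by omega)) (by omega) q1 c hq1v hq1dead hq1card
    refine ⟨q', ?_, hdead', hcard'⟩
    intro j
    rcases hq j with h | h
    · by_cases hjT : j ∈ T
      · have hq1j : q1 j = el n (L+1) := by rw [hq1]; exact pat_of_mem h hjT
        rcases hext j with h' | h'
        · right
          rw [h', hq1j, el_val hn]
          exact ⟨h, by omega, by omega⟩
        · exfalso
          have h0 := h'.1
          rw [hq1j] at h0
          exact el_ne h0
      · have hq1j : q1 j = 0 := by rw [hq1]; exact pat_of_nmem h hjT
        rcases hext j with h' | h'
        · left; rw [h', hq1j, h]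
        · right
          exact ⟨h, h'.2.1, by have := h'.2.2; omega⟩
    · have hne : q j ≠ 0 := by intro h0; rw [h0] at h; simp at h
      have hq1j : q1 j = q j := by rw [hq1]; exact pat_of_ne hne
      rcases hext j with h' | h'
      · left; rw [h', hq1j]
      · exfalso
        have h0 := h'.1
        rw [hq1j] at h0
        exact hne h0

theorem LB_all {n m k : ℕ} {t : (Fin k → Fin (n+2)) → Fin (n+2)}
    (hm : 2 ≤ m) (hk : 0 < k) (hpoly : PolyA n m t) :
    ∀ i, LBstmt n m k t i := by
  have hcons : ∀ q : Fin k → Fin (n+2), ∃ j, t q = q j := cons_of_poly hpoly hk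
  intro i
  induction i using Nat.strong_induction_on with
  | _ i IH =>
  intro s q hi hq hseed
  by_contra hle
  push_neg at hle
  have hcmp := hpoly.1 i hi
  have hdead : t q = 0 :=
    strip_toDead hm hcmp hi hcons q hq (Zs q)
      (hseed (Zs q) (Finset.Subset.refl _) (by simp))
  have hq'ex : ∃ q' : Fin k → Fin (n+2),
      (∀ j, q' j = q j ∨ (q j = 0 ∧ 1 ≤ (q' j).val ∧ (q' j).val ≤ i)) ∧
      t q' = 0 ∧ (Zs q').card ≤ s * m := by
    cases i with
    | zero =>
      refine ⟨q, fun j => Or.inl rfl, hdead, ?_⟩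
      have hpow : m ^ 2 ^ 0 = m := by norm_num
      rw [hpow] at hle
      exact hle
    | succ i' =>
      have hcard : (Zs q).card ≤ (s * m) * m ^ (2 ^ (i'+1) - 1) := by
        have h2 : 1 ≤ 2 ^ (i'+1) := Nat.one_le_two_pow
        have hexp : m * m ^ (2 ^ (i'+1) - 1) = m ^ 2 ^ (i'+1) := by
          rw [← pow_succ']
          congr 1
          omega
        calc (Zs q).card ≤ s * m ^ 2 ^ (i'+1) := hle
        _ = (s * m) * m ^ (2 ^ (i'+1) - 1) := by rw [Nat.mul_assoc, hexp]
      exact inner_step hm hpoly i' (fun l hl => IH l (by omega)) (by omega) q (s*m)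
        (fun j => (hq j).imp id (fun h => by omega)) hdead hcard
  obtain ⟨q', hext, hdead', hcard'⟩ := hq'ex
  have hq'low : ∀ j, q j = 0 → (q' j).val ≤ i := by
    intro j h
    rcases hext j with h' | h'
    · rw [h', h]; simp
    · exact h'.2.2
  have hq'hi : ∀ j, q j ≠ 0 → q' j = q j := by
    intro j h
    rcases hext j with h' | h'
    · exact h'
    · exact absurd h'.1 h
  have hEsub : Zs q' ⊆ Zs q := by
    intro j hj
    rw [mem_Zs] at *
    rcases hext j with h' | h'
    · rw [← h']; exact hj
    · exfalso
      have := h'.2.1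
      rw [hj] at this
      simp at this
  obtain ⟨π, hπb, hπc⟩ := exists_partition m (Zs q') s
    (by rw [Nat.mul_comm m s]; exact hcard')
  set u : Fin k → Fin (m+1) → Fin (n+2) := fun j p =>
    if p = 0 then q' j else if q j = 0 then
      (if j ∈ Zs q' ∧ π j = p.val then 0 else el n i) else q j with hu
  have hu0 : ∀ j, u j 0 = q' j := by
    intro j; simp [hu]
  have huA : ∀ (j : Fin k) (p : Fin (m+1)), p ≠ 0 → q j ≠ 0 → u j p = q j := by
    intro j p hp hqj; simp [hu, hp, hqj]
  have huB : ∀ (j : Fin k) (p : Fin (m+1)), p ≠ 0 → q j = 0 → j ∈ Zs q' → π j = p.val →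
      u j p = 0 := by
    intro j p hp hqj hjE hπj; simp [hu, hp, hqj, hjE, hπj]
  have huC : ∀ (j : Fin k) (p : Fin (m+1)), p ≠ 0 → q j = 0 →
      ¬ (j ∈ Zs q' ∧ π j = p.val) → u j p = el n i := by
    intro j p hp hqj hc; simp only [hu]; rw [if_neg hp, if_pos hqj, if_neg hc]
  have hrows : ∀ j, u j ∈ Srel n m i := by
    intro j
    by_cases hqj : q j = 0
    · by_cases hjE : j ∈ Zs q'
      · have hq'j : q' j = 0 := mem_Zs.mp hjE
        left
        refine ⟨?_, ?_, ?_⟩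
        · rw [hu0 j, hq'j]
          simp
        · intro p hp
          by_cases hc : j ∈ Zs q' ∧ π j = p.val
          · rw [huB j p hp hqj hc.1 hc.2]; left; rfl
          · rw [huC j p hp hqj hc]; right; exact el_val hi
        · rintro ⟨-, hall⟩
          have hπj := hπb j hjE
          have hplt : π j < m + 1 := by omega
          have hpne : (⟨π j, hplt⟩ : Fin (m+1)) ≠ 0 := by
            intro h0
            have := congrArg Fin.val h0
            simp at this
            omega
          have hv := hall ⟨π j, hplt⟩ hpne
          rw [huB j ⟨π j, hplt⟩ hpne hqj hjE rfl] at hv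
          simp at hv
      · have hq'j : q' j ≠ 0 := fun h0 => hjE (mem_Zs.mpr h0)
        have hv1 : 1 ≤ (q' j).val := by
          rcases hext j with h' | h'
          · exfalso
            rw [h', hqj] at hq'j
            exact hq'j rfl
          · exact h'.2.1
        have hvi : (q' j).val ≤ i := hq'low j hqj
        left
        refine ⟨?_, ?_, ?_⟩
        · rw [hu0 j]
          exact hvi
        · intro p hp
          by_cases hc : j ∈ Zs q' ∧ π j = p.val
          · rw [huB j p hp hqj hc.1 hc.2]; left; rfl
          · rw [huC j p hp hqj hc]; right; exact el_val hi
        · rintro ⟨hz, -⟩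
          rw [hu0 j] at hz
          omega
    · right
      have hbig : i + 2 ≤ (q j).val := by
        rcases hq j with h | h
        · exact absurd h hqj
        · exact h
      refine ⟨q j, hbig, ?_⟩
      intro p
      by_cases hp : p = 0
      · rw [hp, hu0 j]; exact hq'hi j hqj
      · rw [huA j p hp hqj]
  have hres := hcmp u hrows
  have h0 : (fun j => u j 0) = q' := funext fun j => hu0 j
  have hcolp : ∀ p : Fin (m+1), p ≠ 0 →
      (fun j => u j p) =
        pat q (el n i) ((Zs q) \ ((Zs q').filter (fun j => π j = p.val))) := by
    intro p hp
    funext j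
    by_cases hqj : q j = 0
    · by_cases hc : j ∈ Zs q' ∧ π j = p.val
      · rw [huB j p hp hqj hc.1 hc.2]
        rw [pat_of_nmem hqj]
        intro hmem
        rw [Finset.mem_sdiff] at hmem
        exact hmem.2 (Finset.mem_filter.mpr ⟨hc.1, hc.2⟩)
      · rw [huC j p hp hqj hc]
        rw [pat_of_mem hqj]
        rw [Finset.mem_sdiff]
        refine ⟨mem_Zs.mpr hqj, ?_⟩
        intro hmem
        rw [Finset.mem_filter] at hmem
        exact hc ⟨hmem.1, hmem.2⟩
    · rw [huA j p hp hqj, pat_of_ne hqj]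
  have hcolval : ∀ p : Fin (m+1), p ≠ 0 → t (fun j => u j p) = el n i := by
    intro p hp
    rw [hcolp p hp]
    apply hseed
    · exact Finset.sdiff_subset
    · rw [Finset.sdiff_sdiff_self_left]
      have heq : Zs q ∩ ((Zs q').filter (fun j => π j = p.val))
          = (Zs q').filter (fun j => π j = p.val) :=
        Finset.inter_eq_right.mpr ((Finset.filter_subset _ _).trans hEsub)
      rw [heq]
      exact hπc p.val
  simp only [Srel, Set.mem_setOf_eq] at hres
  rcases hres with ⟨-, -, h3⟩ | ⟨cv, hcv, hall⟩
  · apply h3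
    constructor
    · show (t fun j => u j 0).val = 0
      rw [h0, hdead']
      rfl
    · intro p hp
      show (t fun j => u j p).val = i + 1
      rw [hcolval p hp, el_val hi]
  · have hc0 := hall 0
    rw [h0] at hc0
    rw [hdead'] at hc0
    rw [← hc0] at hcv
    simp at hcv

end NUAux

/-- For `n > 0` or `m > 2`, the structure `𝔄` admits an NU polymorphism of arity
`m^(2^n) + 1`, but no NU polymorphism of arity `k` for any `3 ≤ k ≤ m^(2^n)`. -/
theorem stmt12 (n m : ℕ) (hm : 2 ≤ m) (hnm : 0 < n ∨ 2 < m) :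
    (∃ f : (Fin (m ^ 2 ^ n + 1) → Fin (n + 2)) → Fin (n + 2),
      PolyA n m f ∧ IsNU f) ∧
    (∀ k, 3 ≤ k → k ≤ m ^ 2 ^ n →
      ¬ ∃ t : (Fin k → Fin (n + 2)) → Fin (n + 2), PolyA n m t ∧ IsNU t) := by
  constructor
  · refine ⟨NUAux.tOp n m, ⟨?_, ?_⟩, NUAux.tOp_isNU n m hm⟩
    · intro i hi
      exact NUAux.tOp_compat n m (by omega) i hi _
    · intro X hX u hu
      obtain ⟨j, hj⟩ := NUAux.tOp_conservative (n := n) (m := m) (by omega)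
        (by omega : 0 < m ^ 2 ^ n + 1) u
      rw [hj]
      exact hu j
  · rintro k hk3 hkle ⟨t, hpoly, hnu⟩
    have hb := NUAux.LB_all (t := t) hm (by omega) hpoly n
    set q : Fin k → Fin (n+2) := fun _ => 0 with hqdef
    have hZuniv : NUAux.Zs q = (Finset.univ : Finset (Fin k)) := by
      ext j
      simp [NUAux.mem_Zs, hqdef]
    have hseed : ∀ T : Finset (Fin k), T ⊆ NUAux.Zs q → (NUAux.Zs q \ T).card ≤ 1 →
        t (NUAux.pat q (NUAux.el n n) T) = NUAux.el n n := by
      intro T _ hTc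
      rw [hZuniv] at hTc
      have hpatT : ∀ j, NUAux.pat q (NUAux.el n n) T j =
          if j ∈ T then NUAux.el n n else 0 := by
        intro j
        rw [NUAux.pat]
        rw [if_pos rfl]
      rcases Nat.le_one_iff_eq_zero_or_eq_one.mp hTc with h | h
      · have hTuniv : T = Finset.univ := by
          have hsub := Finset.sdiff_eq_empty_iff_subset.mp (Finset.card_eq_zero.mp h)
          exact Finset.univ_subset_iff.mp hsub
        have hpat : NUAux.pat q (NUAux.el n n) T = fun _ => NUAux.el n n := by
          funext j
          rw [hpatT j, hTuniv]
          simp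
        rw [hpat]
        have j0 : Fin k := ⟨0, by omega⟩
        have := hnu.2 (NUAux.el n n) (NUAux.el n n) j0
        rwa [Function.update_eq_self] at this
      · obtain ⟨j0, hj0⟩ := Finset.card_eq_one.mp h
        have hpat : NUAux.pat q (NUAux.el n n) T =
            Function.update (fun _ => NUAux.el n n) j0 0 := by
          funext j
          rw [hpatT j]
          by_cases hj : j = j0
          · subst hj
            have : j ∉ T := by
              have : j ∈ Finset.univ \ T := by rw [hj0]; exact Finset.mem_singleton_self _
              exact (Finset.mem_sdiff.mp this).2
            rw [if_neg this, Function.update_self]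
          · have : j ∈ T := by
              by_contra hnT
              have : j ∈ Finset.univ \ T := Finset.mem_sdiff.mpr ⟨Finset.mem_univ _, hnT⟩
              rw [hj0, Finset.mem_singleton] at this
              exact hj this
            rw [if_pos this, Function.update_of_ne hj]
        rw [hpat]
        exact hnu.2 (NUAux.el n n) 0 j0
    have hfin := hb 1 q (le_refl n) (fun j => Or.inl rfl) hseed
    rw [hZuniv] at hfin
    simp only [Finset.card_univ, Fintype.card_fin, Nat.one_mul] at hfin
    omega
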